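/- Let G be a finite simple graph with n vertices and m ≥ 1 edges. Then, as real numbers, NK(G^{+-+}) ≤ 2^n · NK(G) · ((m+3) - M1(G)/m)^m; moreover, equality holds if G is regular. -/

import Mathlib

open Finset

variable {V : Type*}

/-- The Narumi–Katayama index: the product of the degrees of all vertices. -/
def NK {W : Type*} [Fintype W] (H : SimpleGraph W) [DecidableRel H.Adj] : ℕ :=
  ∏ v, H.degree v

/-- The first Zagreb index: the sum of the squares of the degrees. -/
def M1 [Fintype V] (G : SimpleGraph V) [DecidableRel G.Adj] : ℕ :=
  ∑ v, (G.degree v) ^ 2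

/-- The multiplicative sum Zagreb index: the product over the edges of `G` of the
sum of the degrees of the two endpoints. -/
def Pi1Star [Fintype V] [DecidableEq V] (G : SimpleGraph V) [DecidableRel G.Adj] : ℕ :=
  ∏ e ∈ G.edgeFinset,
    Sym2.lift ⟨fun u v => G.degree u + G.degree v, fun u v => by simp [Nat.add_comm]⟩ e

/-- A generic transformation graph on the vertex set `V(G) ∪ E(G)`, built from a
symmetric irreflexive relation `Rvv` between vertices, a symmetric irreflexive relation
`Ree` between edges, and an incidence relation `Rve` between vertices and edges. -/
def transGraph (G : SimpleGraph V) (Rvv : V → V → Prop) (Ree : Sym2 V → Sym2 V → Prop)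
    (Rve : V → Sym2 V → Prop)
    (hvv : Symmetric Rvv) (hvv' : Irreflexive Rvv)
    (hee : Symmetric Ree) (hee' : Irreflexive Ree) :
    SimpleGraph (V ⊕ G.edgeSet) where
  Adj a b :=
    match a, b with
    | Sum.inl u, Sum.inl v => Rvv u v
    | Sum.inr e, Sum.inr f => Ree e.1 f.1
    | Sum.inl u, Sum.inr e => Rve u e.1
    | Sum.inr e, Sum.inl u => Rve u e.1
  symm := by
    constructor
    rintro (u | e) (v | f) h
    · exact hvv h
    · exact h
    · exact h
    · exact hee h
  loopless := by
    constructor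
    rintro (u | e) h
    · exact hvv' u h
    · exact hee' e.1 h

instance transGraph.instDecidableAdj (G : SimpleGraph V) (Rvv : V → V → Prop)
    (Ree : Sym2 V → Sym2 V → Prop) (Rve : V → Sym2 V → Prop)
    (h1 : Symmetric Rvv) (h2 : Irreflexive Rvv) (h3 : Symmetric Ree) (h4 : Irreflexive Ree)
    [DecidableRel Rvv] [DecidableRel Ree] [∀ u e, Decidable (Rve u e)] :
    DecidableRel (transGraph G Rvv Ree Rve h1 h2 h3 h4).Adj := fun a b =>
  match a, b with
  | Sum.inl u, Sum.inl v => inferInstanceAs (Decidable (Rvv u v))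
  | Sum.inr e, Sum.inr f => inferInstanceAs (Decidable (Ree e.1 f.1))
  | Sum.inl u, Sum.inr e => inferInstanceAs (Decidable (Rve u e.1))
  | Sum.inr e, Sum.inl u => inferInstanceAs (Decidable (Rve u e.1))

/-- Two edges (as elements of `Sym2 V`) are adjacent: distinct and sharing an endpoint. -/
abbrev shareRel : Sym2 V → Sym2 V → Prop := fun e f => e ≠ f ∧ ∃ w, w ∈ e ∧ w ∈ f

lemma shareRel_symm : Symmetric (shareRel (V := V)) :=
  fun _ _ h => ⟨h.1.symm, h.2.imp fun _ hw => ⟨hw.2, hw.1⟩⟩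

lemma shareRel_irrefl : Irreflexive (shareRel (V := V)) := fun _ h => h.1 rfl

/-- Two edges are "non-adjacent": distinct and sharing no endpoint. -/
abbrev coshareRel : Sym2 V → Sym2 V → Prop := fun e f => e ≠ f ∧ ∀ w, w ∈ e → w ∉ f

lemma coshareRel_symm : Symmetric (coshareRel (V := V)) :=
  fun _ _ h => ⟨h.1.symm, fun w hf he => h.2 w he hf⟩

lemma coshareRel_irrefl : Irreflexive (coshareRel (V := V)) := fun _ h => h.1 rfl

/-- Non-adjacency of distinct vertices. -/
abbrev coAdj (G : SimpleGraph V) : V → V → Prop := fun u v => u ≠ v ∧ ¬ G.Adj u v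

lemma coAdj_symm (G : SimpleGraph V) : Symmetric (coAdj G) :=
  fun _ _ h => ⟨h.1.symm, fun ha => h.2 ha.symm⟩

lemma coAdj_irrefl (G : SimpleGraph V) : Irreflexive (coAdj G) := fun _ h => h.1 rfl

variable [Fintype V] [DecidableEq V]

/-- The total transformation graph `G^{+-+}`. -/
abbrev Gpmp (G : SimpleGraph V) [DecidableRel G.Adj] : SimpleGraph (V ⊕ G.edgeSet) :=
  transGraph G G.Adj coshareRel (fun u e => u ∈ e)
    (@id (Symmetric G.Adj) (fun _ _ h => h.symm)) (@id (Irreflexive G.Adj) (fun _ => G.irrefl)) coshareRel_symm coshareRel_irrefl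


def sd (G : SimpleGraph V) [DecidableRel G.Adj] : Sym2 V → ℕ :=
  Sym2.lift ⟨fun u v => G.degree u + G.degree v, fun u v => by simp [Nat.add_comm]⟩

lemma sum_sd (G : SimpleGraph V) [DecidableRel G.Adj] :
    ∑ e ∈ G.edgeFinset, sd G e = ∑ v, (G.degree v) ^ 2 := by
  have h1 : ∀ e ∈ G.edgeFinset, sd G e = ∑ v, if v ∈ e then G.degree v else 0 := by
    intro e he
    induction e using Sym2.ind with
    | _ a b =>
      have hab : G.Adj a b := by rwa [SimpleGraph.mem_edgeFinset, SimpleGraph.mem_edgeSet] at he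
      rw [← Finset.sum_filter]
      have : Finset.univ.filter (· ∈ s(a, b)) = {a, b} := by
        ext v; simp [Sym2.mem_iff]
      rw [this, Finset.sum_pair hab.ne]
      rfl
  rw [Finset.sum_congr rfl h1, Finset.sum_comm]
  refine Finset.sum_congr rfl fun v _ => ?_
  rw [← Finset.sum_filter]
  have : G.edgeFinset.filter (fun e => v ∈ e) = G.incidenceFinset v := by
    ext e
    simp [SimpleGraph.mem_incidenceFinset, SimpleGraph.incidenceSet, SimpleGraph.mem_edgeFinset]
  rw [this, Finset.sum_const, SimpleGraph.card_incidenceFinset_eq_degree, smul_eq_mul, sq]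

lemma degree_inl (G : SimpleGraph V) [DecidableRel G.Adj] (u : V) :
    (Gpmp G).degree (Sum.inl u) = 2 * G.degree u := by
  rw [← SimpleGraph.card_neighborSet_eq_degree]
  have e1 : (Gpmp G).neighborSet (Sum.inl u) ≃
      {v' // (Gpmp G).Adj (Sum.inl u) (Sum.inl v')} ⊕
      {e : G.edgeSet // (Gpmp G).Adj (Sum.inl u) (Sum.inr e)} := Equiv.subtypeSum
  rw [Fintype.card_congr e1, Fintype.card_sum]
  have h1 : Fintype.card {v // (Gpmp G).Adj (Sum.inl u) (Sum.inl v)} = G.degree u := by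
    rw [← SimpleGraph.card_neighborSet_eq_degree]
    exact Fintype.card_congr (Equiv.subtypeEquivRight fun v => Iff.rfl)
  have h2 : Fintype.card {e : G.edgeSet // (Gpmp G).Adj (Sum.inl u) (Sum.inr e)} = G.degree u := by
    rw [← SimpleGraph.card_incidenceSet_eq_degree G u]
    refine Fintype.card_congr ?_
    exact (Equiv.subtypeEquivRight (q := fun e : G.edgeSet => u ∈ e.1) (fun e => Iff.rfl)).trans
      ((Equiv.subtypeSubtypeEquivSubtypeInter (· ∈ G.edgeSet) (u ∈ ·)).trans
        (Equiv.subtypeEquivRight fun e => Iff.rfl))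
  rw [h1, h2]; ring

lemma degree_inr (G : SimpleGraph V) [DecidableRel G.Adj] (e : G.edgeSet) :
    (Gpmp G).degree (Sum.inr e) + sd G e.1 = G.edgeFinset.card + 3 := by
  obtain ⟨e, he⟩ := e
  induction e using Sym2.ind with
  | _ a b =>
  have hab : G.Adj a b := he
  have hdeg : (Gpmp G).degree (Sum.inr ⟨s(a, b), he⟩) =
      Fintype.card {u // u ∈ s(a, b)} +
      Fintype.card {f : G.edgeSet // coshareRel s(a, b) f.1} := by
    have e1 : (Gpmp G).neighborSet (Sum.inr ⟨s(a, b), he⟩) ≃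
        {v' // (Gpmp G).Adj (Sum.inr ⟨s(a, b), he⟩) (Sum.inl v')} ⊕
        {f : G.edgeSet // (Gpmp G).Adj (Sum.inr ⟨s(a, b), he⟩) (Sum.inr f)} := Equiv.subtypeSum
    rw [← SimpleGraph.card_neighborSet_eq_degree, Fintype.card_congr e1, Fintype.card_sum]
    congr 1
  have h1 : Fintype.card {u // u ∈ s(a, b)} = 2 := by
    rw [Fintype.card_subtype]
    have : Finset.univ.filter (· ∈ s(a, b)) = {a, b} := by
      ext v; simp [Sym2.mem_iff]
    rw [this, Finset.card_pair hab.ne]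
  have h2 : Fintype.card {f : G.edgeSet // coshareRel s(a, b) f.1} =
      (G.edgeFinset.filter (fun f => coshareRel s(a, b) f)).card := by
    rw [Fintype.card_congr (Equiv.subtypeSubtypeEquivSubtypeInter _ _), Fintype.card_subtype]
    congr 1
    ext f
    simp [SimpleGraph.mem_edgeFinset]
  have hsplit := Finset.card_filter_add_card_filter_not
    (s := G.edgeFinset) (p := fun f => coshareRel s(a, b) f)
  have hneg : G.edgeFinset.filter (fun f => ¬ coshareRel s(a, b) f) =
      G.incidenceFinset a ∪ G.incidenceFinset b := by
    ext f
    simp only [Finset.mem_filter, SimpleGraph.mem_edgeFinset, Finset.mem_union,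
      SimpleGraph.mem_incidenceFinset, SimpleGraph.incidenceSet, Set.mem_setOf_eq,
      coshareRel, not_and, not_forall, not_not, ne_eq]
    constructor
    · rintro ⟨hf, h⟩
      by_cases hfe : s(a, b) = f
      · exact Or.inl ⟨hf, by rw [← hfe]; exact Sym2.mem_mk_left a b⟩
      · obtain ⟨w, hw1, hw2⟩ := h hfe
        rcases (Sym2.mem_iff).1 hw1 with rfl | rfl
        · exact Or.inl ⟨hf, hw2⟩
        · exact Or.inr ⟨hf, hw2⟩
    · rintro (⟨hf, hw⟩ | ⟨hf, hw⟩)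
      · exact ⟨hf, fun _ => ⟨a, Sym2.mem_mk_left a b, hw⟩⟩
      · exact ⟨hf, fun _ => ⟨b, Sym2.mem_mk_right a b, hw⟩⟩
  have hinter : G.incidenceFinset a ∩ G.incidenceFinset b = {s(a, b)} := by
    ext f
    rw [Finset.mem_inter, SimpleGraph.mem_incidenceFinset, SimpleGraph.mem_incidenceFinset,
      ← Set.mem_inter_iff, G.incidenceSet_inter_incidenceSet_of_adj hab,
      Finset.mem_singleton, Set.mem_singleton_iff]
  have hunion := Finset.card_union_add_card_inter (G.incidenceFinset a) (G.incidenceFinset b)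
  rw [hinter, Finset.card_singleton, SimpleGraph.card_incidenceFinset_eq_degree,
    SimpleGraph.card_incidenceFinset_eq_degree] at hunion
  have hsd : sd G s(a, b) = G.degree a + G.degree b := rfl
  rw [hneg] at hsplit
  rw [hdeg, h1, h2, hsd]
  omega


lemma amgm {ι : Type*} (s : Finset ι) (hs : 0 < s.card) (f : ι → ℝ)
    (hf : ∀ i ∈ s, 0 ≤ f i) :
    ∏ i ∈ s, f i ≤ ((∑ i ∈ s, f i) / s.card) ^ s.card := by
  have hw' : (0:ℝ) < ∑ _i ∈ s, (1:ℝ) := by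
    rw [Finset.sum_const, nsmul_eq_mul, mul_one]
    exact_mod_cast hs
  have h := Real.geom_mean_le_arith_mean s (fun _ => 1) f (fun _ _ => zero_le_one) hw' hf
  simp only [Real.rpow_one, one_mul, Finset.sum_const, nsmul_eq_mul, mul_one] at h
  have hP : 0 ≤ ∏ i ∈ s, f i := Finset.prod_nonneg hf
  have hc : (s.card : ℝ) ≠ 0 := Nat.cast_ne_zero.2 hs.ne'
  calc ∏ i ∈ s, f i = ((∏ i ∈ s, f i) ^ ((s.card : ℝ))⁻¹) ^ s.card := by
        rw [← Real.rpow_natCast ((∏ i ∈ s, f i) ^ ((s.card : ℝ))⁻¹),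
          ← Real.rpow_mul hP, inv_mul_cancel₀ hc, Real.rpow_one]
    _ ≤ ((∑ i ∈ s, f i) / s.card) ^ s.card :=
        pow_le_pow_left₀ (Real.rpow_nonneg hP _) h s.card

lemma degree_inr_real (G : SimpleGraph V) [DecidableRel G.Adj] (e : G.edgeSet) :
    ((Gpmp G).degree (Sum.inr e) : ℝ) = (G.edgeFinset.card : ℝ) + 3 - sd G e.1 := by
  have h := congrArg (Nat.cast (R := ℝ)) (degree_inr G e)
  push_cast at h
  linarith

lemma NK_Gpmp_real (G : SimpleGraph V) [DecidableRel G.Adj] :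
    (NK (Gpmp G) : ℝ) = 2 ^ Fintype.card V * (NK G : ℝ) *
      ∏ e ∈ G.edgeFinset, ((G.edgeFinset.card : ℝ) + 3 - sd G e) := by
  unfold NK
  push_cast
  rw [Fintype.prod_sum_type]
  have h1 : ∏ a : V, ((Gpmp G).degree (Sum.inl a) : ℝ)
      = 2 ^ Fintype.card V * ∏ v, (G.degree v : ℝ) := by
    calc ∏ a : V, ((Gpmp G).degree (Sum.inl a) : ℝ)
        = ∏ v : V, (2 * (G.degree v : ℝ)) :=
          Finset.prod_congr rfl fun v _ => by rw [degree_inl]; push_cast; ring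
      _ = _ := by rw [Finset.prod_mul_distrib, Finset.prod_const, Finset.card_univ]
  have h2 : ∏ e : G.edgeSet, ((Gpmp G).degree (Sum.inr e) : ℝ)
      = ∏ e ∈ G.edgeFinset, ((G.edgeFinset.card : ℝ) + 3 - sd G e) := by
    rw [Finset.prod_congr rfl (fun e (_ : e ∈ Finset.univ) => degree_inr_real G e)]
    have he : G.edgeFinset = G.edgeSet.toFinset := rfl
    rw [he, ← Finset.prod_set_coe (s := G.edgeSet)
      (f := fun e => (G.edgeSet.toFinset.card : ℝ) + 3 - sd G e)]
  rw [h1, h2]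

theorem stmt_16 (G : SimpleGraph V) [DecidableRel G.Adj]
    (hm : 1 ≤ G.edgeFinset.card) :
    (NK (Gpmp G) : ℝ) ≤ 2 ^ Fintype.card V * (NK G : ℝ) * (((G.edgeFinset.card : ℝ) + 3) - (M1 G : ℝ) / G.edgeFinset.card) ^ G.edgeFinset.card ∧
      ((∃ r, G.IsRegularOfDegree r) → (NK (Gpmp G) : ℝ) = 2 ^ Fintype.card V * (NK G : ℝ) * (((G.edgeFinset.card : ℝ) + 3) - (M1 G : ℝ) / G.edgeFinset.card) ^ G.edgeFinset.card) := by
  have hm0 : (G.edgeFinset.card : ℝ) ≠ 0 := Nat.cast_ne_zero.2 (by omega)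
  have hfnn : ∀ e ∈ G.edgeFinset, (0:ℝ) ≤ (G.edgeFinset.card : ℝ) + 3 - sd G e := by
    intro e he
    have h := degree_inr_real G ⟨e, SimpleGraph.mem_edgeFinset.1 he⟩
    have h2 : (0:ℝ) ≤ ((Gpmp G).degree (Sum.inr ⟨e, SimpleGraph.mem_edgeFinset.1 he⟩) : ℝ) :=
      Nat.cast_nonneg _
    rw [h] at h2
    exact h2
  have hsdsum : ∑ e ∈ G.edgeFinset, (sd G e : ℝ) = (M1 G : ℝ) := by
    rw [← Nat.cast_sum, sum_sd]; rfl
  have hsum : ∑ e ∈ G.edgeFinset, ((G.edgeFinset.card : ℝ) + 3 - sd G e)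
      = G.edgeFinset.card * ((G.edgeFinset.card : ℝ) + 3) - M1 G := by
    rw [Finset.sum_sub_distrib, Finset.sum_const, nsmul_eq_mul, hsdsum]
  have hdiv : (∑ e ∈ G.edgeFinset, ((G.edgeFinset.card : ℝ) + 3 - sd G e)) / G.edgeFinset.card
      = ((G.edgeFinset.card : ℝ) + 3) - (M1 G : ℝ) / G.edgeFinset.card := by
    rw [hsum, sub_div, mul_comm, mul_div_assoc, div_self hm0, mul_one]
  constructor
  · rw [NK_Gpmp_real]
    refine mul_le_mul_of_nonneg_left ?_ (by positivity)
    calc ∏ e ∈ G.edgeFinset, ((G.edgeFinset.card : ℝ) + 3 - sd G e)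
        ≤ ((∑ e ∈ G.edgeFinset, ((G.edgeFinset.card : ℝ) + 3 - sd G e)) / G.edgeFinset.card)
          ^ G.edgeFinset.card := amgm _ (by omega) _ hfnn
      _ = _ := by rw [hdiv]
  · rintro ⟨r, hreg⟩
    have hsd : ∀ e ∈ G.edgeFinset, (sd G e : ℝ) = 2 * r := by
      intro e he
      induction e using Sym2.ind with
      | _ a b =>
        have : sd G s(a, b) = G.degree a + G.degree b := rfl
        rw [this, hreg a, hreg b]
        push_cast; ring
    have hM1 : (M1 G : ℝ) / G.edgeFinset.card = 2 * r := by
      rw [← hsdsum, Finset.sum_congr rfl hsd, Finset.sum_const, nsmul_eq_mul,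
        mul_comm, mul_div_assoc, div_self hm0, mul_one]
    rw [NK_Gpmp_real, hM1]
    congr 1
    rw [Finset.prod_congr rfl (fun e he => by rw [hsd e he]), Finset.prod_const]
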